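/- The Hamacher operations are monotone in the parameter φ: for fixed real numbers a, b with 0 ≤ a ≤ 1 and 0 ≤ b ≤ 1, the function φ ↦ T_φ(a,b) is antitone on (0,∞) (if 0 < φ ≤ φ' then T_{φ'}(a,b) ≤ T_φ(a,b)), and the function φ ↦ S_φ(a,b) is monotone on (0,∞) (if 0 < φ ≤ φ' then S_φ(a,b) ≤ S_{φ'}(a,b)). -/
import Mathlib


/-- Hamacher sum (Hamacher t-conorm) with parameter `φ`. -/
noncomputable def hamacherSum (φ a b : ℝ) : ℝ :=
  (a + b - a * b - (1 - φ) * a * b) / (1 - (1 - φ) * a * b)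

/-- Hamacher product (Hamacher t-norm) with parameter `φ`. -/
noncomputable def hamacherProd (φ a b : ℝ) : ℝ :=
  a * b / (φ + (1 - φ) * (a + b - a * b))

theorem hamacher_monotone_in_parameter (a b : ℝ)
    (ha : 0 ≤ a) (ha1 : a ≤ 1) (hb : 0 ≤ b) (hb1 : b ≤ 1) :
    ∀ φ φ' : ℝ, 0 < φ → φ ≤ φ' →
      hamacherProd φ' a b ≤ hamacherProd φ a b ∧
      hamacherSum φ a b ≤ hamacherSum φ' a b := by
  intro φ φ' hφ hle
  have hφ' : 0 < φ' := lt_of_lt_of_le hφ hle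
  have hs0 : 0 ≤ a + b - a * b := by nlinarith
  have hs1 : a + b - a * b ≤ 1 := by nlinarith
  have hu : 0 ≤ a * b := mul_nonneg ha hb
  have hu1 : a * b ≤ 1 := by nlinarith
  have hus : a * b ≤ a + b - a * b := by nlinarith
  have hd : 0 < φ + (1 - φ) * (a + b - a * b) := by nlinarith [mul_nonneg hφ.le (sub_nonneg.2 hs1)]
  have hd' : 0 < φ' + (1 - φ') * (a + b - a * b) := by nlinarith [mul_nonneg hφ'.le (sub_nonneg.2 hs1)]
  have he : 0 < 1 - (1 - φ) * (a * b) := by nlinarith [mul_nonneg hφ.le hu]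
  have he' : 0 < 1 - (1 - φ') * (a * b) := by nlinarith [mul_nonneg hφ'.le hu]
  constructor
  · unfold hamacherProd
    rw [div_le_div_iff₀ hd' hd]
    nlinarith [mul_nonneg (mul_nonneg hu (sub_nonneg.2 hle)) (sub_nonneg.2 hs1)]
  · unfold hamacherSum
    rw [div_le_div_iff₀ (by linarith [he] : (0:ℝ) < 1 - (1 - φ) * a * b)
      (by linarith [he'] : (0:ℝ) < 1 - (1 - φ') * a * b)]
    nlinarith [mul_nonneg (sub_nonneg.2 hle) (mul_nonneg hu (sub_nonneg.2 hs1))]
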